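/- Shapley value as average marginal contribution over orderings: for a finite set D of n points, element k, and valuation U, the value (1/n)·Σ_{d ⊆ D\{k}} (U(d ∪ {k}) − U(d)) / C(n−1, |d|) equals (1/n!)·Σ_{σ ∈ Perm(D)} (U(P_σ(k) ∪ {k}) − U(P_σ(k))), where P_σ(k) is the set of elements preceding k in the ordering σ. -/

import Mathlib

open Finset

section ShapleyAux

variable {α : Type*} [Fintype α] [DecidableEq α]

/-- The set of elements preceding `k` in the ordering `σ`. -/
private def predSet (n : ℕ) (k : α) (σ : Fin n ≃ α) : Finset α :=
  Finset.filter (fun x => σ.symm x < σ.symm k) Finset.univ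

private lemma mem_predSet {n : ℕ} {k : α} {σ : Fin n ≃ α} {x : α} :
    x ∈ predSet n k σ ↔ σ.symm x < σ.symm k := by
  simp [predSet]

private lemma predSet_card {n : ℕ} (k : α) (σ : Fin n ≃ α) :
    (predSet n k σ).card = (σ.symm k : ℕ) := by
  have h : predSet n k σ = (Finset.Iio (σ.symm k)).map σ.toEmbedding := by
    ext x
    rw [mem_predSet, Finset.mem_map_equiv]
    simp
  rw [h, Finset.card_map, Fin.card_Iio]

private lemma predSet_subset {n : ℕ} (k : α) (σ : Fin n ≃ α) :
    predSet n k σ ⊆ (Finset.univ : Finset α).erase k := by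
  intro x hx
  rw [mem_predSet] at hx
  rw [Finset.mem_erase]
  refine ⟨?_, Finset.mem_univ x⟩
  rintro rfl
  exact lt_irrefl _ hx

private lemma predSet_trans {n : ℕ} (k : α) (σ : Fin n ≃ α) (g : α ≃ α) (hg : g k = k) :
    predSet n k (σ.trans g) = (predSet n k σ).map g.toEmbedding := by
  ext x
  rw [mem_predSet, Finset.mem_map_equiv, mem_predSet]
  have h1 : (σ.trans g).symm x = σ.symm (g.symm x) := rfl
  have h2 : (σ.trans g).symm k = σ.symm (g.symm k) := rfl
  have h3 : g.symm k = k := (Equiv.symm_apply_eq g).mpr hg.symm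
  rw [h1, h2, h3]

/-- All fibers of the evaluation map `σ ↦ σ.symm k` have the same cardinality. -/
private lemma evalFiber_card_eq (n : ℕ) (k : α) (p q : Fin n) :
    (Finset.univ.filter fun σ : Fin n ≃ α => σ.symm k = p).card
      = (Finset.univ.filter fun σ : Fin n ≃ α => σ.symm k = q).card := by
  apply Finset.card_nbij' (fun σ => (Equiv.swap p q).trans σ)
    (fun σ => (Equiv.swap p q).trans σ)
  · intro σ hσ
    rw [Finset.mem_coe, Finset.mem_filter] at hσ ⊢
    refine ⟨Finset.mem_univ _, ?_⟩
    have : ((Equiv.swap p q).trans σ).symm k = (Equiv.swap p q).symm (σ.symm k) := rfl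
    rw [this, hσ.2, Equiv.symm_swap, Equiv.swap_apply_left]
  · intro σ hσ
    rw [Finset.mem_coe, Finset.mem_filter] at hσ ⊢
    refine ⟨Finset.mem_univ _, ?_⟩
    have : ((Equiv.swap p q).trans σ).symm k = (Equiv.swap p q).symm (σ.symm k) := rfl
    rw [this, hσ.2, Equiv.symm_swap, Equiv.swap_apply_right]
  · intro σ _
    ext i
    simp [Equiv.swap_apply_self]
  · intro σ _
    ext i
    simp [Equiv.swap_apply_self]

/-- Each evaluation fiber has cardinality `n! / n`. -/
private lemma evalFiber_card (n : ℕ) (hn : Fintype.card α = n) (k : α) (p : Fin n) :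
    n * (Finset.univ.filter fun σ : Fin n ≃ α => σ.symm k = p).card = n.factorial := by
  have e : Fin n ≃ α := (Fintype.equivFinOfCardEq hn).symm
  have hcard : Fintype.card (Fin n ≃ α) = n.factorial := by
    rw [Fintype.card_equiv e, Fintype.card_fin]
  have hsum : (Finset.univ : Finset (Fin n ≃ α)).card
      = ∑ q : Fin n, (Finset.univ.filter fun σ : Fin n ≃ α => σ.symm k = q).card :=
    Finset.card_eq_sum_card_fiberwise (fun σ _ => Finset.mem_univ (σ.symm k))
  have hconst : ∀ q : Fin n,
      (Finset.univ.filter fun σ : Fin n ≃ α => σ.symm k = q).card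
        = (Finset.univ.filter fun σ : Fin n ≃ α => σ.symm k = p).card :=
    fun q => evalFiber_card_eq n k q p
  calc n * (Finset.univ.filter fun σ : Fin n ≃ α => σ.symm k = p).card
      = ∑ _q : Fin n, (Finset.univ.filter fun σ : Fin n ≃ α => σ.symm k = p).card := by
        rw [Finset.sum_const, Finset.card_univ, Fintype.card_fin, smul_eq_mul]
    _ = ∑ q : Fin n, (Finset.univ.filter fun σ : Fin n ≃ α => σ.symm k = q).card :=
        Finset.sum_congr rfl (fun q _ => (hconst q).symm)
    _ = (Finset.univ : Finset (Fin n ≃ α)).card := hsum.symm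
    _ = n.factorial := by rw [Finset.card_univ, hcard]

/-- A permutation of `α` fixing `k` and mapping `d` onto `d'`. -/
private lemma exists_perm_fix_map (k : α) (d d' : Finset α)
    (hd : d ⊆ (Finset.univ : Finset α).erase k) (hd' : d' ⊆ (Finset.univ : Finset α).erase k)
    (hcard : d.card = d'.card) :
    ∃ g : α ≃ α, g k = k ∧ d.map g.toEmbedding = d' := by
  have hk : k ∉ d := fun h => (Finset.mem_erase.mp (hd h)).1 rfl
  have hk' : k ∉ d' := fun h => (Finset.mem_erase.mp (hd' h)).1 rfl
  have hc1 : Fintype.card {x // x ∈ d} = Fintype.card {x // x ∈ d'} := by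
    simp [Fintype.card_coe, hcard]
  have hc2 : Fintype.card {x // x ∉ d} = Fintype.card {x // x ∉ d'} := by
    have h1 : Fintype.card {x // x ∉ d} = Fintype.card α - Fintype.card {x // x ∈ d} :=
      Fintype.card_subtype_compl _
    have h2 : Fintype.card {x // x ∉ d'} = Fintype.card α - Fintype.card {x // x ∈ d'} :=
      Fintype.card_subtype_compl _
    rw [h1, h2, hc1]
  obtain e₁ : {x // x ∈ d} ≃ {x // x ∈ d'} := Fintype.equivOfCardEq hc1
  obtain e₂₀ : {x // x ∉ d} ≃ {x // x ∉ d'} := Fintype.equivOfCardEq hc2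
  set e₂ : {x // x ∉ d} ≃ {x // x ∉ d'} :=
    e₂₀.trans (Equiv.swap (e₂₀ ⟨k, hk⟩) ⟨k, hk'⟩) with he₂
  have he₂k : e₂ ⟨k, hk⟩ = ⟨k, hk'⟩ := by
    rw [he₂]
    simp [Equiv.swap_apply_left]
  set g : α ≃ α :=
    ((Equiv.sumCompl (· ∈ d)).symm.trans ((e₁.sumCongr e₂).trans (Equiv.sumCompl (· ∈ d')))) with hg
  have hpos : ∀ x (hx : x ∈ d), g x = (e₁ ⟨x, hx⟩ : α) := by
    intro x hx
    rw [hg]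
    simp [Equiv.sumCompl_symm_apply_of_pos (p := fun x => x ∈ d) hx]
  have hneg : ∀ x (hx : x ∉ d), g x = (e₂ ⟨x, hx⟩ : α) := by
    intro x hx
    rw [hg]
    simp [Equiv.sumCompl_symm_apply_of_neg (p := fun x => x ∈ d) hx]
  refine ⟨g, ?_, ?_⟩
  · rw [hneg k hk, he₂k]
  · have hsub : d.map g.toEmbedding ⊆ d' := by
      intro y hy
      rw [Finset.mem_map] at hy
      obtain ⟨x, hx, rfl⟩ := hy
      have : g x = (e₁ ⟨x, hx⟩ : α) := hpos x hx
      rw [Equiv.coe_toEmbedding, this]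
      exact (e₁ ⟨x, hx⟩).2
    apply Finset.eq_of_subset_of_card_le hsub
    rw [Finset.card_map, hcard]

/-- Fibers of `predSet` over sets of equal cardinality have the same cardinality. -/
private lemma predFiber_card_eq (n : ℕ) (k : α) (d d' : Finset α)
    (hd : d ⊆ (Finset.univ : Finset α).erase k) (hd' : d' ⊆ (Finset.univ : Finset α).erase k)
    (hcard : d.card = d'.card) :
    (Finset.univ.filter fun σ : Fin n ≃ α => predSet n k σ = d).card
      = (Finset.univ.filter fun σ : Fin n ≃ α => predSet n k σ = d').card := by
  obtain ⟨g, hgk, hgd⟩ := exists_perm_fix_map k d d' hd hd' hcard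
  have hgk' : g.symm k = k := (Equiv.symm_apply_eq g).mpr hgk.symm
  have hgd' : d'.map g.symm.toEmbedding = d := by
    rw [← hgd]
    ext x
    simp [Finset.mem_map_equiv]
  apply Finset.card_nbij' (fun σ => σ.trans g) (fun σ => σ.trans g.symm)
  · intro σ hσ
    rw [Finset.mem_coe, Finset.mem_filter] at hσ ⊢
    refine ⟨Finset.mem_univ _, ?_⟩
    rw [predSet_trans k σ g hgk, hσ.2, hgd]
  · intro σ hσ
    rw [Finset.mem_coe, Finset.mem_filter] at hσ ⊢
    refine ⟨Finset.mem_univ _, ?_⟩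
    rw [predSet_trans k σ g.symm hgk', hσ.2, hgd']
  · intro σ _
    ext i
    simp
  · intro σ _
    ext i
    simp

/-- The key counting identity. -/
private lemma predFiber_card_mul (n : ℕ) (hn : Fintype.card α = n) (h1 : 1 ≤ n) (k : α)
    (d : Finset α) (hd : d ∈ ((Finset.univ : Finset α).erase k).powerset) :
    (Finset.univ.filter fun σ : Fin n ≃ α => predSet n k σ = d).card
      * ((n - 1).choose d.card) * n = n.factorial := by
  rw [Finset.mem_powerset] at hd
  have hkmem : k ∈ (Finset.univ : Finset α) := Finset.mem_univ k
  have herase : ((Finset.univ : Finset α).erase k).card = n - 1 := by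
    rw [Finset.card_erase_of_mem hkmem, Finset.card_univ, hn]
  have hj : d.card ≤ n - 1 := herase ▸ Finset.card_le_card hd
  have hjn : d.card < n := lt_of_le_of_lt hj (Nat.sub_lt h1 Nat.one_pos)
  set p : Fin n := ⟨d.card, hjn⟩ with hp
  -- the evaluation fiber at p decomposes as the union of predSet-fibers
  have hmaps : ∀ σ ∈ (Finset.univ.filter fun σ : Fin n ≃ α => σ.symm k = p),
      predSet n k σ ∈ Finset.powersetCard d.card ((Finset.univ : Finset α).erase k) := by
    intro σ hσ
    rw [Finset.mem_filter] at hσ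
    rw [Finset.mem_powersetCard]
    refine ⟨predSet_subset k σ, ?_⟩
    rw [predSet_card, hσ.2]
  have hpart : (Finset.univ.filter fun σ : Fin n ≃ α => σ.symm k = p).card
      = ∑ d' ∈ Finset.powersetCard d.card ((Finset.univ : Finset α).erase k),
          ((Finset.univ.filter fun σ : Fin n ≃ α => σ.symm k = p).filter
            fun σ => predSet n k σ = d').card :=
    Finset.card_eq_sum_card_fiberwise hmaps
  have hfilter_eq : ∀ d' ∈ Finset.powersetCard d.card ((Finset.univ : Finset α).erase k),
      ((Finset.univ.filter fun σ : Fin n ≃ α => σ.symm k = p).filter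
        fun σ => predSet n k σ = d')
      = Finset.univ.filter fun σ : Fin n ≃ α => predSet n k σ = d' := by
    intro d' hd'
    rw [Finset.mem_powersetCard] at hd'
    ext σ
    simp only [Finset.mem_filter, Finset.mem_univ, true_and]
    constructor
    · exact fun h => h.2
    · intro h
      refine ⟨?_, h⟩
      have : (σ.symm k : ℕ) = d.card := by rw [← predSet_card k σ, h, hd'.2]
      exact Fin.ext this
  have hconst : ∀ d' ∈ Finset.powersetCard d.card ((Finset.univ : Finset α).erase k),
      (Finset.univ.filter fun σ : Fin n ≃ α => predSet n k σ = d').card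
      = (Finset.univ.filter fun σ : Fin n ≃ α => predSet n k σ = d).card := by
    intro d' hd'
    rw [Finset.mem_powersetCard] at hd'
    exact predFiber_card_eq n k d' d hd'.1 hd hd'.2
  have hcount : (Finset.powersetCard d.card ((Finset.univ : Finset α).erase k)).card
      = (n - 1).choose d.card := by
    rw [Finset.card_powersetCard, herase]
  have hkey : (Finset.univ.filter fun σ : Fin n ≃ α => σ.symm k = p).card
      = (Finset.univ.filter fun σ : Fin n ≃ α => predSet n k σ = d).card
          * ((n - 1).choose d.card) := by
    rw [hpart, Finset.sum_congr rfl (fun d' hd' => by rw [hfilter_eq d' hd', hconst d' hd'])]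
    rw [Finset.sum_const, smul_eq_mul, hcount, mul_comm]
  have := evalFiber_card n hn k p
  rw [hkey] at this
  rw [← this]
  ring

end ShapleyAux

/-- Shapley value as average marginal contribution over orderings: the subset form with
weight `1/n` equals the average over all bijections `σ : Fin n ≃ α` of the marginal
contribution of `k` to the set of elements preceding `k` in the ordering `σ`. -/
theorem shapley_eq_average_over_orderings {α : Type*} [Fintype α] [DecidableEq α]
    (n : ℕ) (hn : Fintype.card α = n) (h1 : 1 ≤ n) (k : α) (U : Finset α → ℝ) :
    (1 / (n : ℝ)) * ∑ d ∈ ((Finset.univ : Finset α).erase k).powerset,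
        (U (insert k d) - U d) / ((n - 1).choose d.card)
      = (1 / (n.factorial : ℝ)) * ∑ σ : Fin n ≃ α,
          (U (insert k ({x | σ.symm x < σ.symm k} : Finset α))
            - U ({x | σ.symm x < σ.symm k} : Finset α)) := by
  have hset : ∀ σ : Fin n ≃ α,
      ({x | σ.symm x < σ.symm k} : Finset α) = predSet n k σ := by
    intro σ
    ext x
    rw [mem_predSet]
    simp
  -- rewrite RHS sum in terms of predSet
  have hrhs : ∑ σ : Fin n ≃ α,
      (U (insert k ({x | σ.symm x < σ.symm k} : Finset α))
        - U ({x | σ.symm x < σ.symm k} : Finset α))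
      = ∑ σ : Fin n ≃ α, (U (insert k (predSet n k σ)) - U (predSet n k σ)) := by
    exact Finset.sum_congr rfl (fun σ _ => by rw [hset σ])
  rw [hrhs]
  -- group the sum over σ by predSet
  have hmaps : ∀ σ ∈ (Finset.univ : Finset (Fin n ≃ α)),
      predSet n k σ ∈ ((Finset.univ : Finset α).erase k).powerset := by
    intro σ _
    rw [Finset.mem_powerset]
    exact predSet_subset k σ
  have hgroup : ∑ d ∈ ((Finset.univ : Finset α).erase k).powerset,
        ∑ σ ∈ Finset.univ.filter (fun σ : Fin n ≃ α => predSet n k σ = d),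
          (U (insert k (predSet n k σ)) - U (predSet n k σ))
      = ∑ σ : Fin n ≃ α, (U (insert k (predSet n k σ)) - U (predSet n k σ)) :=
    Finset.sum_fiberwise_of_maps_to hmaps _
  rw [← hgroup]
  have hinner : ∀ d ∈ ((Finset.univ : Finset α).erase k).powerset,
      ∑ σ ∈ Finset.univ.filter (fun σ : Fin n ≃ α => predSet n k σ = d),
        (U (insert k (predSet n k σ)) - U (predSet n k σ))
      = ((Finset.univ.filter fun σ : Fin n ≃ α => predSet n k σ = d).card : ℝ)
          * (U (insert k d) - U d) := by
    intro d _
    calc ∑ σ ∈ Finset.univ.filter (fun σ : Fin n ≃ α => predSet n k σ = d),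
          (U (insert k (predSet n k σ)) - U (predSet n k σ))
        = ∑ _σ ∈ Finset.univ.filter (fun σ : Fin n ≃ α => predSet n k σ = d),
            (U (insert k d) - U d) :=
          Finset.sum_congr rfl (fun σ hσ => by rw [(Finset.mem_filter.mp hσ).2])
      _ = _ := by rw [Finset.sum_const, nsmul_eq_mul]
  rw [Finset.sum_congr rfl hinner]
  rw [Finset.mul_sum, Finset.mul_sum]
  apply Finset.sum_congr rfl
  intro d hd
  have hkey := predFiber_card_mul n hn h1 k d hd
  -- cast to ℝ
  have hkeyR : ((Finset.univ.filter fun σ : Fin n ≃ α => predSet n k σ = d).card : ℝ)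
      * ((n - 1).choose d.card : ℝ) * (n : ℝ) = (n.factorial : ℝ) := by
    exact_mod_cast congrArg (Nat.cast : ℕ → ℝ) hkey
  have hfac : (n.factorial : ℝ) ≠ 0 := Nat.cast_ne_zero.mpr (Nat.factorial_ne_zero n)
  have hnne : (n : ℝ) ≠ 0 := Nat.cast_ne_zero.mpr (by omega)
  have hCne : ((n - 1).choose d.card : ℝ) ≠ 0 := by
    intro h0
    rw [h0, mul_zero, zero_mul] at hkeyR
    exact hfac hkeyR.symm
  have hane : ((Finset.univ.filter fun σ : Fin n ≃ α => predSet n k σ = d).card : ℝ) ≠ 0 := by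
    intro h0
    rw [h0, zero_mul, zero_mul] at hkeyR
    exact hfac hkeyR.symm
  rw [← hkeyR]
  field_simp
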